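/- Suppose ρ is a probability distribution stationary for W. Then for every t ≥ 0, every observable Q : K → ℝ, potential V : K → ℝ and constants a, b ∈ ℝ, the function h ↦ ∑_x ρ(x) (e^{t L_h} Q)(x) is differentiable at h = 0 (HasDerivAt) with derivative a [ ∑_x ρ(x) V(x) Q(x) − ∑_x ρ(x) V(x) (e^{tL} Q)(x) ] − b ∫_0^t ∑_x ρ(x) (L V)(x) (e^{uL} Q)(x) du. (Integrated stationary nonequilibrium response: the equilibrium expression is modified by the correlation with the systematic flux LV.) -/

import Mathlib

open NormedSpace Nat
open scoped Matrix

/-- The generator matrix of the Markov jump process with rates `W`: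
entry `W x y` at `(x, y)` for `x ≠ y` and `-∑_{y ≠ x} W x y` on the diagonal. -/
noncomputable def genMatrix {K : Type*} [Fintype K] [DecidableEq K] (W : K → K → ℝ) :
    Matrix K K ℝ :=
  Matrix.of fun x y =>
    if x = y then -∑ z ∈ Finset.univ.filter (fun z => z ≠ x), W x z else W x y

/-- The semigroup `e^{tL}` (matrix exponential of `t • L`). -/
noncomputable def expL {K : Type*} [Fintype K] [DecidableEq K] (W : K → K → ℝ) (t : ℝ) :
    Matrix K K ℝ :=
  NormedSpace.exp (t • genMatrix W)

/-- Action of `e^{tL}` on observables: `(e^{tL} f)(x) = ∑ y, (e^{tL})_{x,y} f y`. -/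
noncomputable def actE {K : Type*} [Fintype K] [DecidableEq K] (W : K → K → ℝ) (t : ℝ)
    (f : K → ℝ) : K → ℝ :=
  fun x => ∑ y, expL W t x y * f y

/-- Action of `e^{tL}` on distributions: `(μ e^{tL})(x) = ∑ z, μ z (e^{tL})_{z,x}`. -/
noncomputable def muE {K : Type*} [Fintype K] [DecidableEq K] (W : K → K → ℝ) (μ : K → ℝ)
    (t : ℝ) : K → ℝ :=
  fun x => ∑ z, μ z * expL W t z x

/-- The backward generator acting on observables. -/
noncomputable def genL {K : Type*} [Fintype K] (W : K → K → ℝ) (f : K → ℝ) : K → ℝ :=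
  fun x => ∑ y, W x y * (f y - f x)

/-- The linearized perturbation operator
`(L' f)(x) = ∑ y, W x y * (b V y - a V x) * (f y - f x)`. -/
noncomputable def genL' {K : Type*} [Fintype K] (W : K → K → ℝ) (V : K → ℝ) (a b : ℝ)
    (f : K → ℝ) : K → ℝ :=
  fun x => ∑ y, W x y * (b * V y - a * V x) * (f y - f x)

/-- The perturbed rates `W_h x y = W x y * exp (h (b V y - a V x))`. -/
noncomputable def pertW {K : Type*} (W : K → K → ℝ) (V : K → ℝ) (a b h : ℝ) :
    K → K → ℝ :=
  fun x y => W x y * Real.exp (h * (b * V y - a * V x))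


attribute [local instance] Matrix.linftyOpNormedAddCommGroup Matrix.linftyOpNormedRing
  Matrix.linftyOpNormedAlgebra

section Aux

variable {K : Type*} [Fintype K] [DecidableEq K]

/-- generic: matrix with given off-diagonal entries and minus-row-sum diagonal, acting on f. -/
lemma offdiag_mulVec (u : K → K → ℝ) (f : K → ℝ) (x : K) :
    ((Matrix.of fun x y =>
        if x = y then -∑ z ∈ Finset.univ.filter (fun z => z ≠ x), u x z else u x y) *ᵥ f) x
      = ∑ y, u x y * (f y - f x) := by
  classical
  have hfil : (Finset.univ.filter (fun z => z ≠ x)) = Finset.univ.erase x :=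
    Finset.filter_ne' _ _
  have hL := Finset.sum_erase_add Finset.univ
    (fun y => (if x = y then -∑ z ∈ Finset.univ.filter (fun z => z ≠ x), u x z else u x y) * f y)
    (Finset.mem_univ x)
  have hR := Finset.sum_erase_add Finset.univ (fun y => u x y * (f y - f x)) (Finset.mem_univ x)
  have hLerase : ∑ y ∈ Finset.univ.erase x,
      (if x = y then -∑ z ∈ Finset.univ.filter (fun z => z ≠ x), u x z else u x y) * f y
      = ∑ y ∈ Finset.univ.erase x, u x y * f y := by
    refine Finset.sum_congr rfl fun y hy => ?_
    rw [if_neg (Ne.symm (Finset.mem_erase.mp hy).1)]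
  show (fun y => Matrix.of _ x y) ⬝ᵥ f = _
  rw [dotProduct]
  simp only [Matrix.of_apply]
  rw [← hL, hLerase, ← hR]
  simp only [sub_self, mul_zero, add_zero, if_pos rfl, hfil, if_true]
  rw [Finset.sum_congr rfl (fun y _ => mul_sub (u x y) (f y) (f x)),
    Finset.sum_sub_distrib, ← Finset.sum_mul]
  ring

lemma genMatrix_mulVec (W : K → K → ℝ) (f : K → ℝ) :
    genMatrix W *ᵥ f = genL W f := by
  funext x
  exact offdiag_mulVec W f x

/-- the observable pairing as a continuous linear map in the matrix. -/
noncomputable def obsCLM (w Q : K → ℝ) : Matrix K K ℝ →L[ℝ] ℝ :=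
  LinearMap.toContinuousLinearMap
    { toFun := fun M => w ⬝ᵥ (M *ᵥ Q)
      map_add' := by intros; simp [Matrix.add_mulVec]
      map_smul' := by intros; simp [Matrix.smul_mulVec] }

lemma obsCLM_apply (w Q : K → ℝ) (M : Matrix K K ℝ) :
    obsCLM w Q M = w ⬝ᵥ (M *ᵥ Q) := rfl

/-- stationarity as a vector identity. -/
lemma vecMul_genMatrix_eq_zero (W : K → K → ℝ) (ρ : K → ℝ)
    (hstat : ∀ f : K → ℝ, ∑ x, ρ x * genL W f x = 0) :
    ρ ᵥ* genMatrix W = 0 := by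
  funext y
  have h := hstat (Pi.single y 1)
  have h2 : ∑ x, ρ x * genL W (Pi.single y 1) x = ρ ⬝ᵥ (genMatrix W *ᵥ Pi.single y 1) := by
    rw [genMatrix_mulVec]; rfl
  rw [h2, Matrix.dotProduct_mulVec] at h
  have h3 : (ρ ᵥ* genMatrix W) ⬝ᵥ Pi.single y 1 = (ρ ᵥ* genMatrix W) y := by
    simp [dotProduct, Pi.single_apply, mul_ite]
  rw [h3] at h
  simpa using h

lemma vecMul_exp_eq_self (M : Matrix K K ℝ) (ρ : K → ℝ) (hM : ρ ᵥ* M = 0) :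
    ρ ᵥ* exp M = ρ := by
  classical
  let ℓ : Matrix K K ℝ →L[ℝ] (K → ℝ) :=
    LinearMap.toContinuousLinearMap
      { toFun := fun X => ρ ᵥ* X
        map_add' := by intros; simp [Matrix.vecMul_add]
        map_smul' := by
          intro c X
          funext i
          simp only [Matrix.vecMul, dotProduct, Matrix.smul_apply, smul_eq_mul,
            Pi.smul_apply, RingHom.id_apply, Finset.mul_sum]
          exact Finset.sum_congr rfl fun x _ => by ring }
  have hpow : ∀ n : ℕ, ρ ᵥ* (M ^ n) = if n = 0 then ρ else 0 := by
    intro n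
    cases n with
    | zero => simp [Matrix.vecMul_one]
    | succ n =>
      have hp : M ^ (n + 1) = M * M ^ n := pow_succ' M n
      rw [hp]
      rw [← Matrix.vecMul_vecMul, hM]
      simp [Matrix.zero_vecMul]
  have hsum : Summable fun n : ℕ => (n !⁻¹ : ℝ) • M ^ n := expSeries_summable' M
  have : ρ ᵥ* exp M = ℓ (exp M) := rfl
  rw [this, exp_eq_tsum (𝕂 := ℝ), ℓ.map_tsum hsum]
  have : ∀ n : ℕ, ℓ ((n !⁻¹ : ℝ) • M ^ n) = (n !⁻¹ : ℝ) • (ρ ᵥ* (M ^ n)) := by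
    intro n; rw [map_smul]; rfl
  rw [tsum_congr this]
  rw [tsum_eq_single 0 (by intro n hn; rw [hpow]; simp [hn])]
  simp [hpow]

end Aux

/-- continuous extension of the exponential difference quotient. -/
noncomputable def gq (c h : ℝ) : ℝ := if h = 0 then c else (Real.exp (h * c) - 1) / h

lemma gq_zero (c : ℝ) : gq c 0 = c := by simp [gq]

lemma gq_mul (c h : ℝ) : h * gq c h = Real.exp (h * c) - 1 := by
  rcases eq_or_ne h 0 with rfl | hh
  · simp [gq]
  · rw [gq, if_neg hh]; field_simp

lemma continuous_gq (c : ℝ) : Continuous (gq c) := by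
  rw [continuous_iff_continuousAt]
  intro h
  rcases eq_or_ne h 0 with rfl | hh
  · rw [← continuousWithinAt_compl_self]
    show Filter.Tendsto (gq c) (nhdsWithin 0 {0}ᶜ) (nhds (gq c 0))
    rw [gq_zero]
    have hd : HasDerivAt (fun x : ℝ => Real.exp (x * c)) c 0 := by
      simpa [Function.comp_def] using (Real.hasDerivAt_exp (0 * c)).comp 0 ((hasDerivAt_id (0:ℝ)).mul_const c)
    have ht := hasDerivAt_iff_tendsto_slope.mp hd
    refine Filter.Tendsto.congr' ?_ ht
    filter_upwards [eventually_mem_nhdsWithin] with x hx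
    have hx0 : x ≠ 0 := hx
    rw [slope_def_field, gq, if_neg hx0]
    simp
  · have hcont : ContinuousAt (fun x : ℝ => (Real.exp (x * c) - 1) / x) h := by
      exact ContinuousAt.div (by fun_prop) continuousAt_id hh
    refine hcont.congr ?_
    filter_upwards [isOpen_ne.mem_nhds hh] with x hx
    rw [gq, if_neg hx]

section Main

variable {K : Type*} [Fintype K] [DecidableEq K]

/-- the difference-quotient matrix of `h ↦ genMatrix (pertW W V a b h)`. -/
noncomputable def qMat (W : K → K → ℝ) (V : K → ℝ) (a b h : ℝ) : Matrix K K ℝ :=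
  Matrix.of fun x y =>
    if x = y then -∑ z ∈ Finset.univ.filter (fun z => z ≠ x), W x z * gq (b * V z - a * V x) h
    else W x y * gq (b * V y - a * V x) h

lemma continuous_qMat (W : K → K → ℝ) (V : K → ℝ) (a b : ℝ) :
    Continuous fun h => qMat W V a b h := by
  apply continuous_matrix
  intro x y
  by_cases hxy : x = y
  · simp only [qMat, Matrix.of_apply, if_pos hxy]
    exact (continuous_finset_sum _ fun z _ =>
      (continuous_const.mul (continuous_gq _))).neg
  · simp only [qMat, Matrix.of_apply, if_neg hxy]
    exact continuous_const.mul (continuous_gq _)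

lemma pertW_zero (W : K → K → ℝ) (V : K → ℝ) (a b : ℝ) : pertW W V a b 0 = W := by
  funext x y; simp [pertW]

lemma genMatrix_pertW (W : K → K → ℝ) (V : K → ℝ) (a b h : ℝ) :
    genMatrix (pertW W V a b h) = genMatrix W + h • qMat W V a b h := by
  ext x y
  by_cases hxy : x = y
  · simp only [genMatrix, qMat, Matrix.add_apply, Matrix.smul_apply, Matrix.of_apply,
      if_pos hxy, smul_eq_mul, pertW]
    rw [mul_neg, ← neg_add, Finset.mul_sum, ← Finset.sum_add_distrib]
    congr 1
    refine Finset.sum_congr rfl fun z _ => ?_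
    rw [← mul_assoc, mul_comm h (W x z), mul_assoc, gq_mul]
    ring
  · simp only [genMatrix, qMat, Matrix.add_apply, Matrix.smul_apply, Matrix.of_apply,
      if_neg hxy, smul_eq_mul, pertW]
    rw [← mul_assoc, mul_comm h (W x y), mul_assoc, gq_mul]
    ring

lemma qMat_zero_mulVec (W : K → K → ℝ) (V : K → ℝ) (a b : ℝ) (f : K → ℝ) (x : K) :
    (qMat W V a b 0 *ᵥ f) x = genL' W V a b f x := by
  have : qMat W V a b 0 = Matrix.of fun x y =>
      if x = y then -∑ z ∈ Finset.univ.filter (fun z => z ≠ x),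
        (fun x z => W x z * (b * V z - a * V x)) x z
      else (fun x y => W x y * (b * V y - a * V x)) x y := by
    ext x y; by_cases hxy : x = y <;> simp [qMat, hxy, gq_zero]
  rw [this, offdiag_mulVec]
  rfl

end Main

section Main2

variable {K : Type*} [Fintype K] [DecidableEq K]

lemma vecMul_smul_right (ρ : K → ℝ) (c : ℝ) (M : Matrix K K ℝ) :
    ρ ᵥ* (c • M) = c • (ρ ᵥ* M) := by
  funext i
  simp only [Matrix.vecMul, dotProduct, Matrix.smul_apply, smul_eq_mul,
    Pi.smul_apply, Finset.mul_sum]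
  exact Finset.sum_congr rfl fun x _ => by ring

lemma hasDerivAt_inner (B C : Matrix K K ℝ) (w Q : K → ℝ) (t s : ℝ) :
    HasDerivAt (fun s : ℝ => obsCLM w Q (exp (s • B) * exp ((t - s) • C)))
      (obsCLM w Q (exp (s • B) * (B - C) * exp ((t - s) • C))) s := by
  have hu : HasDerivAt (fun s : ℝ => exp (s • B)) (exp (s • B) * B) s :=
    hasDerivAt_exp_smul_const B s
  have hv : HasDerivAt (fun s : ℝ => exp ((t - s) • C)) (-(C * exp ((t - s) • C))) s := by
    have h0 : HasDerivAt (fun u : ℝ => exp (u • C)) (C * exp ((t - s) • C)) (t - s) :=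
      hasDerivAt_exp_smul_const' C (t - s)
    have h1 : HasDerivAt (fun s : ℝ => t - s) (-1 : ℝ) s := by
      simpa using (hasDerivAt_id s).const_sub t
    have h2 := h0.scomp s h1
    have h3 := h2
    simp only [neg_smul, one_smul, Function.comp_def] at h3
    exact h3
  have hmul := hu.mul hv
  have hcomp := (obsCLM w Q).hasFDerivAt.comp_hasDerivAt s hmul
  refine hcomp.congr_deriv ?_
  show obsCLM w Q _ = obsCLM w Q _
  congr 1
  noncomm_ring

lemma obs_inner_continuous (B C : Matrix K K ℝ) (D : Matrix K K ℝ) (w Q : K → ℝ) (t : ℝ) :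
    Continuous fun s : ℝ => obsCLM w Q (exp (s • B) * D * exp ((t - s) • C)) :=
  (obsCLM w Q).continuous.comp <|
    (((exp_continuous.comp (continuous_id.smul continuous_const)).matrix_mul
      continuous_const).matrix_mul
      (exp_continuous.comp ((continuous_const.sub continuous_id).smul continuous_const)))

lemma G_sub (W : K → K → ℝ) (V : K → ℝ) (a b : ℝ) (ρ Q : K → ℝ) (t h : ℝ) :
    obsCLM ρ Q (exp (t • genMatrix (pertW W V a b h)))
      - obsCLM ρ Q (exp (t • genMatrix W))
    = h * ∫ s in (0:ℝ)..t, obsCLM ρ Q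
        (exp (s • genMatrix (pertW W V a b h)) * qMat W V a b h
          * exp ((t - s) • genMatrix W)) := by
  set B := genMatrix (pertW W V a b h) with hB
  set C := genMatrix W with hC
  set qm := qMat W V a b h with hqm
  have hBC : B - C = h • qm := by
    rw [hB, genMatrix_pertW, hC]; abel
  have hderiv : ∀ s ∈ Set.uIcc (0:ℝ) t,
      HasDerivAt (fun s : ℝ => obsCLM ρ Q (exp (s • B) * exp ((t - s) • C)))
        (h * obsCLM ρ Q (exp (s • B) * qm * exp ((t - s) • C))) s := by
    intro s _
    have := hasDerivAt_inner B C ρ Q t s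
    convert this using 1
    rw [hBC, mul_smul_comm, smul_mul_assoc, map_smul, smul_eq_mul]
  have hint : IntervalIntegrable
      (fun s => h * obsCLM ρ Q (exp (s • B) * qm * exp ((t - s) • C))) MeasureTheory.volume 0 t :=
    (continuous_const.mul (obs_inner_continuous B C qm ρ Q t)).intervalIntegrable 0 t
  have hFTC := intervalIntegral.integral_eq_sub_of_hasDerivAt hderiv hint
  rw [intervalIntegral.integral_const_mul] at hFTC
  rw [hFTC]
  congr 1
  · rw [sub_self, zero_smul, exp_zero, mul_one]
  · rw [zero_smul, exp_zero, one_mul, sub_zero]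

end Main2

section Main3

variable {K : Type*} [Fintype K] [DecidableEq K]

lemma sum_genL'_eq (W : K → K → ℝ) (V : K → ℝ) (a b : ℝ) (ρ : K → ℝ)
    (hstat : ∀ f : K → ℝ, ∑ x, ρ x * genL W f x = 0) (f : K → ℝ) :
    ∑ x, ρ x * genL' W V a b f x
      = -(b * ∑ x, ρ x * (genL W V x * f x)) - a * ∑ x, ρ x * (V x * genL W f x) := by
  have hdec : ∀ x, genL' W V a b f x
      = b * (genL W (fun y => V y * f y) x - f x * genL W V x) - a * (V x * genL W f x) := by
    intro x
    simp only [genL, genL', Finset.mul_sum, ← Finset.sum_sub_distrib]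
    exact Finset.sum_congr rfl fun y _ => by ring
  calc ∑ x, ρ x * genL' W V a b f x
      = ∑ x, (b * (ρ x * genL W (fun y => V y * f y) x)
          - (b * (ρ x * (genL W V x * f x)) + a * (ρ x * (V x * genL W f x)))) :=
        Finset.sum_congr rfl fun x _ => by rw [hdec x]; ring
    _ = b * (∑ x, ρ x * genL W (fun y => V y * f y) x)
          - (b * ∑ x, ρ x * (genL W V x * f x) + a * ∑ x, ρ x * (V x * genL W f x)) := by
        rw [Finset.sum_sub_distrib, Finset.sum_add_distrib, ← Finset.mul_sum, ← Finset.mul_sum,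
          ← Finset.mul_sum]
    _ = _ := by rw [hstat]; ring

lemma phi_zero (W : K → K → ℝ) (V : K → ℝ) (a b : ℝ) (ρ Q : K → ℝ)
    (hstat : ∀ f : K → ℝ, ∑ x, ρ x * genL W f x = 0) (s u : ℝ) :
    obsCLM ρ Q (exp (s • genMatrix W) * qMat W V a b 0 * exp (u • genMatrix W))
      = -(b * ∑ x, ρ x * (genL W V x * actE W u Q x))
        - a * ∑ x, ρ x * (V x * genL W (actE W u Q) x) := by
  have hρ : ρ ᵥ* exp (s • genMatrix W) = ρ := by
    apply vecMul_exp_eq_self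
    rw [vecMul_smul_right, vecMul_genMatrix_eq_zero W ρ hstat, smul_zero]
  rw [obsCLM_apply, Matrix.dotProduct_mulVec, ← Matrix.vecMul_vecMul, ← Matrix.vecMul_vecMul,
    hρ, ← Matrix.dotProduct_mulVec, ← Matrix.dotProduct_mulVec]
  have hact : exp (u • genMatrix W) *ᵥ Q = actE W u Q := rfl
  rw [hact]
  have h1 : ρ ⬝ᵥ (qMat W V a b 0 *ᵥ actE W u Q)
      = ∑ x, ρ x * genL' W V a b (actE W u Q) x :=
    Finset.sum_congr rfl fun x _ => by rw [qMat_zero_mulVec]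
  rw [h1, sum_genL'_eq W V a b ρ hstat]

theorem integrated_stationary_response'
    {K : Type*} [Fintype K] [Nonempty K] [DecidableEq K]
    (W : K → K → ℝ) (hW : ∀ x y : K, x ≠ y → 0 ≤ W x y)
    (ρ : K → ℝ) (hρ0 : ∀ x, 0 ≤ ρ x) (hρ1 : ∑ x, ρ x = 1)
    (hstat : ∀ f : K → ℝ, ∑ x, ρ x * genL W f x = 0)
    (V Q : K → ℝ) (a b : ℝ) (t : ℝ) (ht : 0 ≤ t) :
    HasDerivAt
      (fun h : ℝ => ∑ x, ρ x * ∑ y, expL (pertW W V a b h) t x y * Q y)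
      (a * ((∑ x, ρ x * V x * Q x) - ∑ x, ρ x * V x * actE W t Q x)
        - b * ∫ u in (0:ℝ)..t, ∑ x, ρ x * genL W V x * actE W u Q x) 0 := by
  classical
  have hGfun : (fun h : ℝ => ∑ x, ρ x * ∑ y, expL (pertW W V a b h) t x y * Q y)
      = fun h : ℝ => obsCLM ρ Q (exp (t • genMatrix (pertW W V a b h))) := rfl
  rw [hGfun]
  set Phi_ : ℝ → ℝ → ℝ := fun h s => obsCLM ρ Q
    (exp (s • genMatrix (pertW W V a b h)) * qMat W V a b h
      * exp ((t - s) • genMatrix W)) with hPhi_def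
  have hA : Continuous fun h : ℝ => genMatrix (pertW W V a b h) := by
    have he : (fun h : ℝ => genMatrix (pertW W V a b h))
        = fun h => genMatrix W + h • qMat W V a b h := funext (genMatrix_pertW W V a b)
    rw [he]
    exact continuous_const.add (continuous_id.smul (continuous_qMat W V a b))
  have hPhi_c : Continuous (Function.uncurry Phi_) := by
    apply (obsCLM ρ Q).continuous.comp
    apply Continuous.matrix_mul
    apply Continuous.matrix_mul
    · exact exp_continuous.comp (continuous_snd.smul (hA.comp continuous_fst))
    · exact (continuous_qMat W V a b).comp continuous_fst
    · exact exp_continuous.comp ((continuous_const.sub continuous_snd).smul continuous_const)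
  have hΨc : Continuous fun h => ∫ s in (0:ℝ)..t, Phi_ h s :=
    intervalIntegral.continuous_parametric_intervalIntegral_of_continuous' hPhi_c 0 t
  have hD : HasDerivAt (fun h : ℝ => obsCLM ρ Q (exp (t • genMatrix (pertW W V a b h))))
      (∫ s in (0:ℝ)..t, Phi_ 0 s) 0 := by
    rw [hasDerivAt_iff_tendsto_slope]
    have htend : Filter.Tendsto (fun h => ∫ s in (0:ℝ)..t, Phi_ h s)
        (nhdsWithin 0 {(0:ℝ)}ᶜ) (nhds (∫ s in (0:ℝ)..t, Phi_ 0 s)) :=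
      (hΨc.tendsto 0).mono_left nhdsWithin_le_nhds
    refine htend.congr' ?_
    filter_upwards [eventually_mem_nhdsWithin] with h hh
    have hh0 : h ≠ 0 := hh
    rw [slope_def_field, sub_zero]
    have hG0 : obsCLM ρ Q (exp (t • genMatrix (pertW W V a b 0)))
        = obsCLM ρ Q (exp (t • genMatrix W)) := by rw [pertW_zero]
    rw [hG0, G_sub W V a b ρ Q t h, mul_div_cancel_left₀ _ hh0]
  -- now compute the value of the integral at h = 0
  have hval : (∫ s in (0:ℝ)..t, Phi_ 0 s)
      = a * ((∑ x, ρ x * V x * Q x) - ∑ x, ρ x * V x * actE W t Q x)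
        - b * ∫ u in (0:ℝ)..t, ∑ x, ρ x * genL W V x * actE W u Q x := by
    set C := genMatrix W with hCdef
    set c1 : ℝ → ℝ := fun u => obsCLM (fun x => ρ x * genL W V x) Q (exp (u • C)) with hc1def
    set c2 : ℝ → ℝ := fun u => obsCLM (fun x => ρ x * V x) Q (C * exp (u • C)) with hc2def
    have hc1 : ∀ u, c1 u = ∑ x, ρ x * (genL W V x * actE W u Q x) := fun u =>
      Finset.sum_congr rfl fun x _ => mul_assoc _ _ _
    have hc2 : ∀ u, c2 u = ∑ x, ρ x * (V x * genL W (actE W u Q) x) := by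
      intro u
      have hmv : (C * exp (u • C)) *ᵥ Q = genL W (actE W u Q) := by
        rw [← Matrix.mulVec_mulVec]
        have : exp (u • C) *ᵥ Q = actE W u Q := rfl
        rw [this, genMatrix_mulVec]
      rw [hc2def]
      show (fun x => ρ x * V x) ⬝ᵥ ((C * exp (u • C)) *ᵥ Q) = _
      rw [hmv]
      exact Finset.sum_congr rfl fun x _ => mul_assoc _ _ _
    have hPhi_0 : ∀ s, Phi_ 0 s = -(b * c1 (t - s)) - a * c2 (t - s) := by
      intro s
      have h0 : genMatrix (pertW W V a b 0) = genMatrix W := by rw [pertW_zero]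
      rw [hPhi_def]
      show obsCLM ρ Q (exp (s • genMatrix (pertW W V a b 0)) * qMat W V a b 0
        * exp ((t - s) • genMatrix W)) = _
      rw [h0, phi_zero W V a b ρ Q hstat s (t - s), hc1 (t - s), hc2 (t - s)]
    have hcont1 : Continuous c1 :=
      (obsCLM _ Q).continuous.comp (exp_continuous.comp (continuous_id.smul continuous_const))
    have hcont2 : Continuous c2 :=
      (obsCLM _ Q).continuous.comp (continuous_const.matrix_mul
        (exp_continuous.comp (continuous_id.smul continuous_const)))
    calc (∫ s in (0:ℝ)..t, Phi_ 0 s) = ∫ s in (0:ℝ)..t, (-(b * c1 (t - s)) - a * c2 (t - s)) := by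
          apply intervalIntegral.integral_congr
          intro s _
          exact hPhi_0 s
      _ = ∫ u in (0:ℝ)..t, (-(b * c1 u) - a * c2 u) := by
          have := intervalIntegral.integral_comp_sub_left
            (a := (0:ℝ)) (b := t) (fun u => -(b * c1 u) - a * c2 u) t
          rw [this, sub_self, sub_zero]
      _ = -(b * ∫ u in (0:ℝ)..t, c1 u) - a * ∫ u in (0:ℝ)..t, c2 u := by
          rw [intervalIntegral.integral_sub (f := fun u => -(b * c1 u)) (g := fun u => a * c2 u)
            (((continuous_const.mul hcont1).neg).intervalIntegrable 0 t)
            ((continuous_const.mul hcont2).intervalIntegrable 0 t),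
            intervalIntegral.integral_neg, intervalIntegral.integral_const_mul,
            intervalIntegral.integral_const_mul]
      _ = a * ((∑ x, ρ x * V x * Q x) - ∑ x, ρ x * V x * actE W t Q x)
            - b * ∫ u in (0:ℝ)..t, ∑ x, ρ x * genL W V x * actE W u Q x := by
          have hderiv2 : ∀ u ∈ Set.uIcc (0:ℝ) t,
              HasDerivAt (fun u : ℝ => obsCLM (fun x => ρ x * V x) Q (exp (u • C)))
                (c2 u) u := by
            intro u _
            exact (obsCLM (fun x => ρ x * V x) Q).hasFDerivAt.comp_hasDerivAt u
              (hasDerivAt_exp_smul_const' C u)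
          have hint2 := intervalIntegral.integral_eq_sub_of_hasDerivAt hderiv2
            (hcont2.intervalIntegrable 0 t)
          have he1 : obsCLM (fun x => ρ x * V x) Q (exp (t • C))
              = ∑ x, ρ x * V x * actE W t Q x := rfl
          have he0 : obsCLM (fun x => ρ x * V x) Q (exp ((0:ℝ) • C))
              = ∑ x, ρ x * V x * Q x := by
            rw [zero_smul, exp_zero]
            show (fun x => ρ x * V x) ⬝ᵥ ((1 : Matrix K K ℝ) *ᵥ Q) = _
            rw [Matrix.one_mulVec]
            rfl
          have hc1' : (∫ u in (0:ℝ)..t, c1 u)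
              = ∫ u in (0:ℝ)..t, ∑ x, ρ x * genL W V x * actE W u Q x := rfl
          rw [hint2, he1, he0, hc1']
          ring
  rw [← hval]
  exact hD

end Main3


/-- integrated stationary nonequilibrium response: if `ρ` is stationary
for `W`, then for every `t ≥ 0` the map `h ↦ ∑ x, ρ x * (e^{t L_h} Q) x` is
differentiable at `h = 0` with derivative
`a (⟨V(t)Q(t)⟩_ρ - ⟨V(0)Q(t)⟩_ρ) - b ∫_0^t ⟨(LV)(x_0) Q(x_u)⟩_ρ du`. -/
theorem integrated_stationary_response
    {K : Type*} [Fintype K] [Nonempty K] [DecidableEq K]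
    (W : K → K → ℝ) (hW : ∀ x y : K, x ≠ y → 0 ≤ W x y)
    (ρ : K → ℝ) (hρ0 : ∀ x, 0 ≤ ρ x) (hρ1 : ∑ x, ρ x = 1)
    (hstat : ∀ f : K → ℝ, ∑ x, ρ x * genL W f x = 0)
    (V Q : K → ℝ) (a b : ℝ) (t : ℝ) (ht : 0 ≤ t) :
    HasDerivAt
      (fun h : ℝ => ∑ x, ρ x * ∑ y, expL (pertW W V a b h) t x y * Q y)
      (a * ((∑ x, ρ x * V x * Q x) - ∑ x, ρ x * V x * actE W t Q x)
        - b * ∫ u in (0:ℝ)..t, ∑ x, ρ x * genL W V x * actE W u Q x) 0 :=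
  integrated_stationary_response' W hW ρ hρ0 hρ1 hstat V Q a b t ht
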